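/- K_{5,5} is a circuit of the 3-dimensional rigidity matroid: for every configuration p : V(K_{5,5}) → ℂ^3 the 25 rows of the rigidity matrix R_{K_{5,5}}(p) are linearly dependent, and for every proper subset S of the edge set of K_{5,5} there exists a configuration p for which the rows of R_{K_{5,5}}(p) indexed by S are linearly independent. -/

import Mathlib

open scoped BigOperators

noncomputable section

/-- Complex squared length (no conjugation). -/
def csq (d : ℕ) (x y : Fin d → ℂ) : ℂ := ∑ k, (x k - y k) ^ 2

lemma csq_comm (d : ℕ) (x y : Fin d → ℂ) : csq d x y = csq d y x := by
  unfold csq; congr 1; funext k; ring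

/-- Squared length of an (unordered) edge under a configuration. -/
def edgeSq {V : Type*} (d : ℕ) (p : V → Fin d → ℂ) : Sym2 V → ℂ :=
  Sym2.lift ⟨fun u v => csq d (p u) (p v), fun u v => csq_comm d (p u) (p v)⟩

/-- The measurement map of a graph: a configuration goes to its vector of
squared edge lengths. -/
def measMap {V : Type*} (G : SimpleGraph V) (d : ℕ) (p : V → Fin d → ℂ) :
    G.edgeSet → ℂ := fun e => edgeSq d p (e : Sym2 V)

/-- The `d`-dimensional measurement variety of a graph: the Zariski closure
(zero locus of the vanishing ideal) of the image of the measurement map. -/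
def measVariety {V : Type*} (G : SimpleGraph V) (d : ℕ) : Set (G.edgeSet → ℂ) :=
  MvPolynomial.zeroLocus ℂ (MvPolynomial.vanishingIdeal ℂ (Set.range (measMap G d)))

/-- Row of the rigidity matrix for the ordered pair (u,v). -/
def rRowFun {V : Type*} [DecidableEq V] (p : V → Fin 3 → ℂ) (u v : V) :
    V → Fin 3 → ℂ :=
  fun w k => if w = u then 2 * (p u k - p v k)
    else if w = v then 2 * (p v k - p u k) else 0

lemma rRowFun_comm {V : Type*} [DecidableEq V] (p : V → Fin 3 → ℂ) (u v : V) :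
    rRowFun p u v = rRowFun p v u := by
  funext w k
  unfold rRowFun
  rcases eq_or_ne w u with h1 | h1 <;> rcases eq_or_ne w v with h2 | h2
  · have huv : u = v := h1.symm.trans h2
    subst huv; simp [h1]
  · have huv : u ≠ v := fun h => h2 (h1.trans h)
    simp [h1, h2, huv, huv.symm]
  · have huv : v ≠ u := fun h => h1 (h2.trans h)
    simp [h1, h2, huv, huv.symm]
  · simp [h1, h2]

/-- Row of the rigidity matrix corresponding to an unordered edge. -/
def rigidityRow {V : Type*} [DecidableEq V] (p : V → Fin 3 → ℂ) :
    Sym2 V → (V → Fin 3 → ℂ) :=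
  Sym2.lift ⟨rRowFun p, rRowFun_comm p⟩

/-- A fintype instance for edge sets over finite vertex types. -/
noncomputable instance edgeSetFintype {V : Type*} [Finite V] (G : SimpleGraph V) :
    Fintype G.edgeSet := Fintype.ofFinite _

noncomputable instance neighborSetFintype' {V : Type*} [Finite V] (G : SimpleGraph V) (v : V) :
    Fintype (G.neighborSet v) := Fintype.ofFinite _

/-- The space of equilibrium stresses of the framework `(G, p)`:
the left kernel of the rigidity matrix. -/
def stressSpace {V : Type*} [DecidableEq V] [Finite V] (G : SimpleGraph V)
    (p : V → Fin 3 → ℂ) : Submodule ℂ (G.edgeSet → ℂ) where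
  carrier := {ω | ∑ e : G.edgeSet, ω e • rigidityRow p (e : Sym2 V) = 0}
  add_mem' := by
    intro a b ha hb
    simp only [Set.mem_setOf_eq] at *
    simp only [Pi.add_apply, add_smul, Finset.sum_add_distrib, ha, hb, add_zero]
  zero_mem' := by simp
  smul_mem' := by
    intro c a ha
    simp only [Set.mem_setOf_eq] at *
    simp only [Pi.smul_apply, smul_eq_mul, mul_smul, ← Finset.smul_sum, ha, smul_zero]

/-- The span of the rows of the rigidity matrix of `(G,p)`. -/
def rowSpan {V : Type*} [DecidableEq V] (G : SimpleGraph V) (p : V → Fin 3 → ℂ) :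
    Submodule ℂ (V → Fin 3 → ℂ) :=
  Submodule.span ℂ (Set.range fun e : G.edgeSet => rigidityRow p (e : Sym2 V))

/-- The rank of the rigidity matrix of `(G,p)`. -/
def rigidityRank {V : Type*} [DecidableEq V] (G : SimpleGraph V) (p : V → Fin 3 → ℂ) : ℕ :=
  Module.finrank ℂ (rowSpan G p)

/-- `G` is a circuit of the 3-dimensional rigidity matroid: its full edge set is
dependent (for every configuration), but every proper subset of its edge set is
independent (for some configuration). -/
def IsRigidityCircuit {V : Type*} [DecidableEq V] (G : SimpleGraph V) : Prop :=
  (∀ p : V → Fin 3 → ℂ, ¬ LinearIndependent ℂ (fun e : G.edgeSet => rigidityRow p (e : Sym2 V))) ∧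
  (∀ S : Set (Sym2 V), S ⊆ G.edgeSet → S ≠ G.edgeSet →
    ∃ p : V → Fin 3 → ℂ, LinearIndependent ℂ (fun e : S => rigidityRow p (e : Sym2 V)))

/-- `G` is generically rigid in 3 dimensions. -/
def IsThreeRigid {V : Type*} [DecidableEq V] [Fintype V] (G : SimpleGraph V) : Prop :=
  ∃ p : V → Fin 3 → ℂ, rigidityRank G p = 3 * Fintype.card V - 6

/-- The complete bipartite graph `K_{5,5}`. -/
def K55 : SimpleGraph (Fin 5 ⊕ Fin 5) := completeBipartiteGraph (Fin 5) (Fin 5)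

/-- A vector is balanced if its coordinates sum to zero. -/
def IsBalanced {E : Type*} [Fintype E] (ω : E → ℂ) : Prop := ∑ e, ω e = 0

/-- The Zariski tangent space to a subset `W ⊆ ℂ^E` at a point `x`:
vectors annihilated by the differentials at `x` of all polynomials in the
vanishing ideal of `W`. -/
def zTangent {E : Type*} [Fintype E] (W : Set (E → ℂ)) (x : E → ℂ) :
    Submodule ℂ (E → ℂ) where
  carrier := {v | ∀ f ∈ MvPolynomial.vanishingIdeal ℂ W,
    ∑ e, v e * MvPolynomial.eval x (MvPolynomial.pderiv e f) = 0}
  add_mem' := by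
    intro a b ha hb
    simp only [Set.mem_setOf_eq] at *
    intro f hf
    simp only [Pi.add_apply, add_mul, Finset.sum_add_distrib, ha f hf, hb f hf, add_zero]
  zero_mem' := by simp
  smul_mem' := by
    intro c a ha
    simp only [Set.mem_setOf_eq] at *
    intro f hf
    simp only [Pi.smul_apply, smul_eq_mul, mul_assoc, ← Finset.mul_sum, ha f hf, mul_zero]

/-- Krull dimension of (the Zariski closure of) a subset of `ℂ^E`, as the Krull
dimension of its coordinate ring. -/
def varietyDim {E : Type*} (W : Set (E → ℂ)) : WithBot (WithTop ℕ) :=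
  ringKrullDim (MvPolynomial E ℂ ⧸ MvPolynomial.vanishingIdeal ℂ W)

/-- `x` is a smooth point of `W` if it lies on `W` and its Zariski tangent space
has dimension equal to the Krull dimension of `W`. -/
def IsSmoothPoint {E : Type*} [Fintype E] (W : Set (E → ℂ)) (x : E → ℂ) : Prop :=
  x ∈ W ∧ (Module.finrank ℂ (zTangent W x) : WithBot (WithTop ℕ)) = varietyDim W

/-- `ω` is a normal vector to `W` at `x`. -/
def IsNormalAt {E : Type*} [Fintype E] (W : Set (E → ℂ)) (x : E → ℂ) (ω : E → ℂ) : Prop :=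
  ∀ v ∈ zTangent W x, ∑ e, ω e * v e = 0

/-- The set `S(G)` of smooth points of a measurement variety. -/
def smoothLocus {E : Type*} [Fintype E] (W : Set (E → ℂ)) : Set (E → ℂ) :=
  {x | IsSmoothPoint W x}

/-- The set `B(G)` of smooth points all of whose normal vectors are balanced. -/
def balancedLocus {E : Type*} [Fintype E] (W : Set (E → ℂ)) : Set (E → ℂ) :=
  {x | IsSmoothPoint W x ∧ ∀ ω : E → ℂ, IsNormalAt W x ω → IsBalanced ω}



section AuxRigidity


def cross (x y : Fin 3 → ℂ) : Fin 3 → ℂ :=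
  ![x 1 * y 2 - x 2 * y 1, x 2 * y 0 - x 0 * y 2, x 0 * y 1 - x 1 * y 0]

lemma cross_apply0 (x y : Fin 3 → ℂ) : cross x y 0 = x 1 * y 2 - x 2 * y 1 := rfl
lemma cross_apply1 (x y : Fin 3 → ℂ) : cross x y 1 = x 2 * y 0 - x 0 * y 2 := rfl
lemma cross_apply2 (x y : Fin 3 → ℂ) : cross x y 2 = x 0 * y 1 - x 1 * y 0 := rfl

lemma cross_key {a x y : Fin 3 → ℂ} (h1 : cross a x = 0) (h2 : cross a y = 0) :
    ∀ i j, a i * cross x y j = 0 := by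
  have A0 : a 1 * x 2 - a 2 * x 1 = 0 := congrFun h1 0
  have A1 : a 2 * x 0 - a 0 * x 2 = 0 := congrFun h1 1
  have A2 : a 0 * x 1 - a 1 * x 0 = 0 := congrFun h1 2
  have B0 : a 1 * y 2 - a 2 * y 1 = 0 := congrFun h2 0
  have B1 : a 2 * y 0 - a 0 * y 2 = 0 := congrFun h2 1
  have B2 : a 0 * y 1 - a 1 * y 0 = 0 := congrFun h2 2
  have k00 : a 0 * cross x y 0 = 0 := by
    rw [cross_apply0]; linear_combination y 2 * A2 + y 1 * A1 + x 0 * B0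
  have k01 : a 0 * cross x y 1 = 0 := by
    rw [cross_apply1]; linear_combination x 0 * B1 - y 0 * A1
  have k02 : a 0 * cross x y 2 = 0 := by
    rw [cross_apply2]; linear_combination x 0 * B2 - y 0 * A2
  have k10 : a 1 * cross x y 0 = 0 := by
    rw [cross_apply0]; linear_combination x 1 * B0 - y 1 * A0
  have k11 : a 1 * cross x y 1 = 0 := by
    rw [cross_apply1]; linear_combination y 0 * A0 + y 2 * A2 + x 1 * B1
  have k12 : a 1 * cross x y 2 = 0 := by
    rw [cross_apply2]; linear_combination x 1 * B2 - y 1 * A2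
  have k20 : a 2 * cross x y 0 = 0 := by
    rw [cross_apply0]; linear_combination x 2 * B0 - y 2 * A0
  have k21 : a 2 * cross x y 1 = 0 := by
    rw [cross_apply1]; linear_combination x 2 * B1 - y 2 * A1
  have k22 : a 2 * cross x y 2 = 0 := by
    rw [cross_apply2]; linear_combination y 1 * A1 + y 0 * A0 + x 2 * B2
  intro i j
  fin_cases i <;> fin_cases j <;>
    first
      | exact k00 | exact k01 | exact k02 | exact k10 | exact k11 | exact k12
      | exact k20 | exact k21 | exact k22

lemma eq_zero_of_crosses {a x y : Fin 3 → ℂ} (h1 : cross a x = 0) (h2 : cross a y = 0)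
    (h3 : cross x y ≠ 0) : a = 0 := by
  obtain ⟨j, hj⟩ : ∃ j, cross x y j ≠ 0 := by
    by_contra h; push_neg at h; exact h3 (funext fun j => h j)
  funext i
  rcases mul_eq_zero.mp (cross_key h1 h2 i j) with h | h
  · exact h
  · exact absurd h hj

lemma exists_smul_of_cross_eq_zero {a u : Fin 3 → ℂ} (h : cross a u = 0) (hu : u ≠ 0) :
    ∃ c : ℂ, a = c • u := by
  obtain ⟨k, hk⟩ : ∃ k, u k ≠ 0 := by
    by_contra h'; push_neg at h'; exact hu (funext fun k => h' k)
  have A0 : a 1 * u 2 - a 2 * u 1 = 0 := congrFun h 0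
  have A1 : a 2 * u 0 - a 0 * u 2 = 0 := congrFun h 1
  have A2 : a 0 * u 1 - a 1 * u 0 = 0 := congrFun h 2
  refine ⟨a k / u k, funext fun i => ?_⟩
  have key : a i * u k = a k * u i := by
    have e01 : a 0 * u 1 = a 1 * u 0 := by linear_combination A2
    have e02 : a 0 * u 2 = a 2 * u 0 := by linear_combination -A1
    have e12 : a 1 * u 2 = a 2 * u 1 := by linear_combination A0
    fin_cases i <;> fin_cases k <;>
      first
        | rfl | exact e01 | exact e01.symm | exact e02 | exact e02.symm
        | exact e12 | exact e12.symm
  simp only [Pi.smul_apply, smul_eq_mul]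
  field_simp
  linear_combination key



lemma cross_sub (A B C : Fin 3 → ℂ) :
    cross (fun k => A k - B k) C = fun j => cross A C j - cross B C j := by
  have h0 : cross (fun k => A k - B k) C 0 = cross A C 0 - cross B C 0 := by
    rw [cross_apply0, cross_apply0, cross_apply0]; ring
  have h1 : cross (fun k => A k - B k) C 1 = cross A C 1 - cross B C 1 := by
    rw [cross_apply1, cross_apply1, cross_apply1]; ring
  have h2 : cross (fun k => A k - B k) C 2 = cross A C 2 - cross B C 2 := by
    rw [cross_apply2, cross_apply2, cross_apply2]; ring
  funext j
  fin_cases j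
  · exact h0
  · exact h1
  · exact h2

variable {V : Type*} [DecidableEq V] [Fintype V]

/-- Six infinitesimal trivial flexes: 3 translations and 3 rotations. -/
def flexV (p : V → Fin 3 → ℂ) : Fin 6 → V → Fin 3 → ℂ :=
  ![fun _ => ![1,0,0], fun _ => ![0,1,0], fun _ => ![0,0,1],
    fun v => cross ![1,0,0] (p v), fun v => cross ![0,1,0] (p v),
    fun v => cross ![0,0,1] (p v)]

/-- Pairing against the six flexes. -/
def Lmap (p : V → Fin 3 → ℂ) : (V → Fin 3 → ℂ) →ₗ[ℂ] (Fin 6 → ℂ) where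
  toFun x := fun m => ∑ v, ∑ k, x v k * flexV p m v k
  map_add' x y := by
    funext m
    simp only [Pi.add_apply, add_mul, Finset.sum_add_distrib]
  map_smul' c x := by
    funext m
    simp only [Pi.smul_apply, smul_eq_mul, RingHom.id_apply, Finset.mul_sum, mul_assoc]


/-- Multiplication against a fixed direction vector. -/
def Tmap {V : Type*} [DecidableEq V] [Fintype V] (u : Fin 3 → ℂ) :
    (V → ℂ) →ₗ[ℂ] (V → Fin 3 → ℂ) where
  toFun f := fun w k => f w * u k
  map_add' f g := by funext w k; simp [add_mul]
  map_smul' c f := by funext w k; simp [mul_assoc]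

lemma rRow_pair {p : V → Fin 3 → ℂ} {u v : V} (huv : u ≠ v) (g : V → Fin 3 → ℂ) :
    ∑ w, ∑ k, rRowFun p u v w k * g w k
      = (∑ k, 2 * (p u k - p v k) * g u k) + ∑ k, 2 * (p v k - p u k) * g v k := by
  have step : ∀ w, (∑ k, rRowFun p u v w k * g w k)
      = (if w = u then ∑ k, 2 * (p u k - p v k) * g w k else 0)
        + (if w = v then ∑ k, 2 * (p v k - p u k) * g w k else 0) := by
    intro w
    unfold rRowFun
    by_cases h1 : w = u
    · subst h1
      simp [huv]
    · by_cases h2 : w = v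
      · subst h2
        simp [h1]
      · simp [h1, h2]
  rw [Finset.sum_congr rfl fun w _ => step w, Finset.sum_add_distrib]
  congr 1
  · rw [Finset.sum_ite_eq' Finset.univ u]
    simp
  · rw [Finset.sum_ite_eq' Finset.univ v]
    simp

lemma flexV_app0 (p : V → Fin 3 → ℂ) : flexV p 0 = fun _ => ![1,0,0] := rfl
lemma flexV_app1 (p : V → Fin 3 → ℂ) : flexV p 1 = fun _ => ![0,1,0] := rfl
lemma flexV_app2 (p : V → Fin 3 → ℂ) : flexV p 2 = fun _ => ![0,0,1] := rfl
lemma flexV_app3 (p : V → Fin 3 → ℂ) : flexV p 3 = fun v => cross ![1,0,0] (p v) := rfl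
lemma flexV_app4 (p : V → Fin 3 → ℂ) : flexV p 4 = fun v => cross ![0,1,0] (p v) := rfl
lemma flexV_app5 (p : V → Fin 3 → ℂ) : flexV p 5 = fun v => cross ![0,0,1] (p v) := rfl

lemma rRow_mem_ker (p : V → Fin 3 → ℂ) {u v : V} (huv : u ≠ v) :
    rRowFun p u v ∈ LinearMap.ker (Lmap p) := by
  rw [LinearMap.mem_ker]
  have key : ∀ m : Fin 6, (∑ w, ∑ k, rRowFun p u v w k * flexV p m w k) = 0 := by
    have h0 : (∑ w, ∑ k, rRowFun p u v w k * flexV p 0 w k) = 0 := by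
      rw [rRow_pair huv]
      simp [flexV_app0, Fin.sum_univ_three, cross_apply0, cross_apply1, cross_apply2]
      ring
    have h1 : (∑ w, ∑ k, rRowFun p u v w k * flexV p 1 w k) = 0 := by
      rw [rRow_pair huv]
      simp [flexV_app1, Fin.sum_univ_three, cross_apply0, cross_apply1, cross_apply2]
      ring
    have h2 : (∑ w, ∑ k, rRowFun p u v w k * flexV p 2 w k) = 0 := by
      rw [rRow_pair huv]
      simp [flexV_app2, Fin.sum_univ_three, cross_apply0, cross_apply1, cross_apply2]
      ring
    have h3 : (∑ w, ∑ k, rRowFun p u v w k * flexV p 3 w k) = 0 := by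
      rw [rRow_pair huv]
      simp [flexV_app3, Fin.sum_univ_three, cross_apply0, cross_apply1, cross_apply2]
      ring
    have h4 : (∑ w, ∑ k, rRowFun p u v w k * flexV p 4 w k) = 0 := by
      rw [rRow_pair huv]
      simp [flexV_app4, Fin.sum_univ_three, cross_apply0, cross_apply1, cross_apply2]
      ring
    have h5 : (∑ w, ∑ k, rRowFun p u v w k * flexV p 5 w k) = 0 := by
      rw [rRow_pair huv]
      simp [flexV_app5, Fin.sum_univ_three, cross_apply0, cross_apply1, cross_apply2]
      ring
    intro m
    fin_cases m
    · exact h0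
    · exact h1
    · exact h2
    · exact h3
    · exact h4
    · exact h5
  funext m
  exact key m

lemma vec3_two {α : Type*} (x y z : α) : ![x,y,z] 2 = z := rfl

lemma flex_indep (p : V → Fin 3 → ℂ) (v0 v1 v2 : V)
    (hnc : cross (fun k => p v1 k - p v0 k) (fun k => p v2 k - p v0 k) ≠ 0)
    (c : Fin 6 → ℂ) (hc : ∑ m, c m • flexV p m = 0) : c = 0 := by
  have hv : ∀ v k, ∑ m, c m * flexV p m v k = 0 := by
    intro v k
    have h := congrFun (congrFun hc v) k
    simpa only [Finset.sum_apply, Pi.smul_apply, smul_eq_mul, Pi.zero_apply] using h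
  have E0 : ∀ v, c 0 + c 4 * p v 2 - c 5 * p v 1 = 0 := by
    intro v
    have h := hv v 0
    simp only [Fin.sum_univ_six, flexV_app0, flexV_app1, flexV_app2, flexV_app3,
      flexV_app4, flexV_app5, cross_apply0, Matrix.cons_val_zero, Matrix.cons_val_one,
      Matrix.head_cons, vec3_two] at h
    linear_combination h
  have E1 : ∀ v, c 1 - c 3 * p v 2 + c 5 * p v 0 = 0 := by
    intro v
    have h := hv v 1
    simp only [Fin.sum_univ_six, flexV_app0, flexV_app1, flexV_app2, flexV_app3,
      flexV_app4, flexV_app5, cross_apply1, Matrix.cons_val_zero, Matrix.cons_val_one,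
      Matrix.head_cons, vec3_two] at h
    linear_combination h
  have E2 : ∀ v, c 2 + c 3 * p v 1 - c 4 * p v 0 = 0 := by
    intro v
    have h := hv v 2
    simp only [Fin.sum_univ_six, flexV_app0, flexV_app1, flexV_app2, flexV_app3,
      flexV_app4, flexV_app5, cross_apply2, Matrix.cons_val_zero, Matrix.cons_val_one,
      Matrix.head_cons, vec3_two] at h
    linear_combination h
  set a : Fin 3 → ℂ := ![c 3, c 4, c 5] with ha
  have hcross : ∀ w, cross a (fun k => p w k - p v0 k) = 0 := by
    intro w
    have k0 : cross a (fun k => p w k - p v0 k) 0 = 0 := by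
      rw [cross_apply0]
      show (![c 3, c 4, c 5] 1) * _ - (![c 3, c 4, c 5] 2) * _ = 0
      simp only [Matrix.cons_val_one, Matrix.head_cons, vec3_two, Matrix.cons_val_zero]
      linear_combination E0 w - E0 v0
    have k1 : cross a (fun k => p w k - p v0 k) 1 = 0 := by
      rw [cross_apply1]
      show (![c 3, c 4, c 5] 2) * _ - (![c 3, c 4, c 5] 0) * _ = 0
      simp only [Matrix.cons_val_zero, vec3_two]
      linear_combination E1 w - E1 v0
    have k2 : cross a (fun k => p w k - p v0 k) 2 = 0 := by
      rw [cross_apply2]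
      show (![c 3, c 4, c 5] 0) * _ - (![c 3, c 4, c 5] 1) * _ = 0
      simp only [Matrix.cons_val_zero, Matrix.cons_val_one, Matrix.head_cons]
      linear_combination E2 w - E2 v0
    funext j
    fin_cases j
    · exact k0
    · exact k1
    · exact k2
  have ha0 : a = 0 := eq_zero_of_crosses (hcross v1) (hcross v2) hnc
  have hc3 : c 3 = 0 := congrFun ha0 0
  have hc4 : c 4 = 0 := congrFun ha0 1
  have hc5 : c 5 = 0 := congrFun ha0 2
  have hc0 : c 0 = 0 := by linear_combination E0 v0 - p v0 2 * hc4 + p v0 1 * hc5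
  have hc1 : c 1 = 0 := by linear_combination E1 v0 + p v0 2 * hc3 - p v0 0 * hc5
  have hc2 : c 2 = 0 := by linear_combination E2 v0 - p v0 1 * hc3 + p v0 0 * hc4
  funext m
  fin_cases m <;> simp only [Pi.zero_apply] <;>
    first | exact hc0 | exact hc1 | exact hc2 | exact hc3 | exact hc4 | exact hc5

lemma Lmap_surj (p : V → Fin 3 → ℂ)
    (hind : ∀ c : Fin 6 → ℂ, ∑ m, c m • flexV p m = 0 → c = 0) :
    LinearMap.range (Lmap p) = ⊤ := by
  by_contra hne
  have hlt : LinearMap.range (Lmap p) < ⊤ := lt_top_iff_ne_top.mpr hne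
  obtain ⟨f, hf0, hfmap⟩ :=
    Submodule.exists_dual_map_eq_bot_of_lt_top hlt inferInstance
  have hfL : ∀ x, f (Lmap p x) = 0 := by
    intro x
    have hmem : f (Lmap p x) ∈ (LinearMap.range (Lmap p)).map f :=
      Submodule.mem_map_of_mem (LinearMap.mem_range_self _ x)
    rw [hfmap] at hmem
    exact hmem
  set c : Fin 6 → ℂ := fun i => f (fun j => if i = j then 1 else 0) with hcdef
  have key : ∀ y : Fin 6 → ℂ, f y = ∑ i, y i * c i := by
    intro y
    rw [LinearMap.pi_apply_eq_sum_univ f y]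
    simp only [smul_eq_mul]
    rfl
  have hflex : ∀ v k, ∑ m, c m * flexV p m v k = 0 := by
    intro v k
    have h := hfL (Pi.single (M := fun _ : V => Fin 3 → ℂ) v (Pi.single k 1))
    rw [key] at h
    have hL : ∀ m, (Lmap p (Pi.single v (Pi.single k 1))) m = flexV p m v k := by
      intro m
      show (∑ w, ∑ l, Pi.single (M := fun _ : V => Fin 3 → ℂ) v (Pi.single k 1) w l * flexV p m w l) = _
      rw [Finset.sum_eq_single v]
      · rw [Finset.sum_eq_single k]
        · simp
        · intro l _ hl
          simp [Pi.single_eq_same, Pi.single_eq_of_ne hl]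
        · simp
      · intro w _ hw
        simp [Pi.single_eq_of_ne hw]
      · simp
    rw [Finset.sum_congr rfl fun m _ => by rw [hL m]] at h
    rw [← h]
    exact Finset.sum_congr rfl fun m _ => mul_comm _ _
  have hc0 : c = 0 := by
    apply hind
    funext v k
    simp only [Finset.sum_apply, Pi.smul_apply, smul_eq_mul, Pi.zero_apply]
    exact hflex v k
  apply hf0
  apply LinearMap.ext
  intro y
  rw [key y, hc0]
  simp


section K55Data

def PZ : Fin 5 ⊕ Fin 5 → Fin 3 → ℤ :=
  Sum.elim ![![-1, 2, 7], ![-9, 5, -2], ![-8, -4, -6], ![2, 6, -2], ![3, 8, -6]] ![![9, -2, -9], ![-3, 4, -1], ![-4, 3, -4], ![-7, -5, 5], ![-5, -5, -9]]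

def wZ : Fin 5 × Fin 5 → ℤ := fun ij => ![![-484, 5324, -5808, -968, 1936], ![58, -638, 696, 116, -232], ![-25, 275, -300, -50, 100], ![1515, -16665, 18180, 3030, -6060], ![-1064, 11704, -12768, -2128, 4256]] ij.1 ij.2

def NZ00 : (Fin 5 ⊕ Fin 5) → Fin 3 → ℤ := Sum.elim ![![0, 0, 0], ![0, 0, 0], ![0, 0, 0], ![0, 0, 0], ![0, 0, 0]] ![![0, 0, 0], ![0, 0, 0], ![0, 0, 0], ![0, 0, 0], ![0, 0, 0]]
def NZ01 : (Fin 5 ⊕ Fin 5) → Fin 3 → ℤ := Sum.elim ![![417532340059801, -148599727894028, -39370704061313], ![399597127392178, 96774895934687, 90091364317406], ![59964279872141, 104684771922006, 25069355898139], ![435907435005495, -222506234300952, -86254781103999], ![432708567204449, -242463396951841, -103214792420553]] ![![79098880375839, -420588600013750, -216683489204743], ![389545673648221, -73323689865074, -19698499018613], ![311984890341272, -32164332375172, 0], ![231042422829664, 0, 0], ![0, 0, 0]]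
def NZ02 : (Fin 5 ⊕ Fin 5) → Fin 3 → ℤ := Sum.elim ![![-736078997283865, 252228599512076, 73669737034433], ![-721660483797814, -174772573255181, -162702314662778], ![-108293699470583, -189057573172578, -45274508413057], ![-787235815457685, 401839617170376, 155773559904237], ![-781458755697587, 437881657181683, 186402834072939]] ![![-142850216798157, 759570456741250, 391323913339909], ![-703507858379623, 132420395129462, 35574901212719], ![-563435398974536, 58087824140236, 0], ![-417255718841632, 0, 0], ![0, 0, 0]]
def NZ03 : (Fin 5 ⊕ Fin 5) → Fin 3 → ℤ := Sum.elim ![![102660104145419, -22929872682916, -15633206737579], ![65605498527074, 15888415750471, 14791119514798], ![9844881770053, 17187052106598, 4115864401187], ![71566892314335, -36530874288216, -14161232718567], ![71041705063417, -39807423380153, -16945712188449]] ![![12986383345287, -69051859703750, -35574901212719], ![63955259852693, -12038217739042, -3234081928429], ![51221399906776, -5280711285476, 0], ![37932338076512, 0, 0], ![0, 0, 0]]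
def NZ04 : (Fin 5 ⊕ Fin 5) → Fin 3 → ℤ := Sum.elim ![![164211428127535, -46748634455684, -8313387322655], ![184888223121754, 44776444387691, 41684064087158], ![27744666806513, 48436237754958, 11599254221527], ![201688514704035, -102950645721336, -39908928570507], ![200208441542357, -112184556798613, -47756097985629]] ![![36597989427627, -194600695528750, -100256539781299], ![180237550493953, -33925886355482, -9114230889209], ![144351217919096, -14882004531796, 0], ![106900225488352, 0, 0], ![0, 0, 0]]
def NZ10 : (Fin 5 ⊕ Fin 5) → Fin 3 → ℤ := Sum.elim ![![418365295971257, -175175016670348, -27952254199537], ![460253475656054, 117608340184549, 94990071539818], ![74318674796791, 147245801236890, 25236741051161], ![532761598493037, -303731470444752, -55469287794141], ![591618189083641, -349838656913129, -61680990932817]] ![![141598377324231, -609043498011032, -97704477458627], ![446893389630485, -65110361273920, -7568113765237], ![369521661946888, -14231122548548, 0], ![204677025122672, 0, 0], ![0, 0, 0]]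
def NZ11 : (Fin 5 ⊕ Fin 5) → Fin 3 → ℤ := Sum.elim ![![-142459059626591, 65178126141844, 7099334719591], ![-170559925419242, -44762830870315, -33515913281974], ![-22560026975473, -44286183460950, -7797965821823], ![-182899856763531, 106815204555696, 15047392461723], ![-202280179411615, 120590753538095, 16853879765895]] ![![-44670678781857, 209402399142440, 36034062344261], ![-155789661354275, 32668281839680, 2304524075971], ![-132683107420600, 16413300844316, 0], ![-64051467554576, 0, 0], ![0, 0, 0]]
def NZ12 : (Fin 5 ⊕ Fin 5) → Fin 3 → ℤ := Sum.elim ![![4237963570668055, -2105560612382900, -138308124749495], ![5009092492297930, 1329190399558895, 963495139086110], ![588367759559675, 1141079921445270, 208007785744585], ![5485840610786955, -3279776747311260, -331905722154975], ![6042456026813453, -3631585751235397, -376344482815821]] ![![1222052662022151, -6290151500479546, -1155265381584595], ![4743507000242005, -1288162027880030, -60344336017265], ![4153739188993724, -836844385161448, 0], ![1735373481304840, 0, 0], ![0, 0, 0]]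
def NZ13 : (Fin 5 ⊕ Fin 5) → Fin 3 → ℤ := Sum.elim ![![6533139390426833, -2990491310951212, -324944899065553], ![7701543284000690, 2611559195064913, 670083026479090], ![1033883444772229, 2029432166279610, 357406056012359], ![8388131689930653, -4899402090328788, -689071262271129], ![9276736872267859, -5530645132355771, -771836085839283]] ![![2047665042702249, -9603669296563118, -1653232530946013], ![7145418039939515, -1500889372649530, -105614076868303], ![6086599208105812, -755717968193192, 0], ![2935917894628568, 0, 0], ![0, 0, 0]]
def NZ14 : (Fin 5 ⊕ Fin 5) → Fin 3 → ℤ := Sum.elim ![![-683843604670195, 313302113305220, 33891226596515], ![-782858132734654, -172855331739875, -110984549403806], ![-108081489676115, -212132245535310, -37370741164345], ![-878086161517095, 513006000533460, 71933874964515], ![-971065895548709, 578983262452141, 80581584170613]] ![![-214156881795063, 1005346738166638, 173188025962915], ![-748114702345765, 157631030248490, 11041230251225], ![-637447968122372, 79685530387024, 0], ![-307027396948600, 0, 0], ![0, 0, 0]]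
def NZ20 : (Fin 5 ⊕ Fin 5) → Fin 3 → ℤ := Sum.elim ![![-581737495981141, 243581091781724, 38867646340781], ![-639983065094302, -163534552182737, -132083819792834], ![-103340215350683, -204745480875570, -35091721725493], ![-740805705556281, 422339010354576, 77130117856233], ![-822645872419733, 486451113966277, 85767499265421]] ![![-111976859082171, 885641728759648, 176470143295975], ![-621405847850305, 90536043248960, 10523472174881], ![-513820358432744, 19788394678324, 0], ![-284603673455536, 0, 0], ![0, 0, 0]]
def NZ21 : (Fin 5 ⊕ Fin 5) → Fin 3 → ℤ := Sum.elim ![![-313559045900323, 304800471209540, -54960444679093], ![-756782273350738, -229406817566999, -104722988247566], ![-73066555060085, -192968574929742, -8743696750171], ![-783398212094871, 579448345185360, -127163473196409], ![-1054205373394883, 687405905105107, -167544593069109]] ![![-295389488980605, 1195342032947440, -343033250381663], ![-677976072685543, 410796091848752, 62642717177015], ![-584433245636504, 96742763471020, 0], ![23721355617776, 0, 0], ![0, 0, 0]]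
def NZ22 : (Fin 5 ⊕ Fin 5) → Fin 3 → ℤ := Sum.elim ![![3426046792496029, -1997323228993724, 17317214560747], ![5104877502348670, 1421302374352241, 886640895124610], ![398085230923172, 787588715904528, 135555658954996], ![5608717827624117, -3628409380466976, 93068341681131], ![6826007387954861, -4244069279521789, 188280510048123]] ![![1421821361482491, -7544664265706008, 381891744384113], ![4772333785193473, -1707366066758312, -246765243054761], ![4023404960510408, -395738085118804, 0], ![1101608763523600, 0, 0], ![0, 0, 0]]
def NZ23 : (Fin 5 ⊕ Fin 5) → Fin 3 → ℤ := Sum.elim ![![3779995669693433, -1815191424218764, -150852669327649], ![4710206646027374, 1251863181975313, 903170680622338], ![-29553050216114, 2127243271206192, -738634140618178], ![5328180557910495, -3215590720982136, -275109424938567], ![6163672141600705, -3730514665708865, -270895492863465]] ![![1042484315576811, -6716600528836268, -559651601153243], ![4497331205797457, -1073265116433988, -144704976407461], ![3750632636448280, -243901161350084, 0], ![1611988118328992, 0, 0], ![0, 0, 0]]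
def NZ24 : (Fin 5 ⊕ Fin 5) → Fin 3 → ℤ := Sum.elim ![![20498523973957364, -8595234488184304, -1364215904908708], ![22579946252818400, 5772382698901576, 4656565431751120], ![631034199535171, 8821468266215118, 1655131439647217], ![26130650702196042, -14906650241371896, -2705914608611634], ![29030415029257036, -17170926485544764, -3007091973991452]] ![![3962270625634536, -31257740352446468, -6187334558230772], ![21920495175292088, -3215719041604972, -374829843597556], ![18127027909334608, -703347728056784, 0], ![10016011769439440, 0, 0], ![0, 0, 0]]
def NZ30 : (Fin 5 ⊕ Fin 5) → Fin 3 → ℤ := Sum.elim ![![-436027155431785, 182570268033740, 29132296593185], ![-479683701541270, -122573336076245, -99000206486090], ![-77456138640455, -153461982819450, -26302144367305], ![-555252853310685, 316553907191760, 57810999152205], ![-616594154849705, 364607571189145, 64284937779585]] ![![-214032044582967, 695673004609696, -234142286422109], ![-465759601329925, 67859083649600, 7887611971685], ![-385121521026440, 14831908724740, 0], ![-213317743861360, 0, 0], ![0, 0, 0]]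
def NZ31 : (Fin 5 ⊕ Fin 5) → Fin 3 → ℤ := Sum.elim ![![-23135096177171309, 8840798392859260, 1915924747416901], ![-23576177730410414, -5854634338820137, -5108338219062898], ![-3410647498831435, -6159767182060146, -1357391771478053], ![-25586049799993833, 13624413116937840, 4176257759091513], ![-26267184844703629, 15022319327385341, 4949109167206533]] ![![-5124235239926835, 26067654246089120, 10417225314414191], ![-22810691779461881, 4628324847611584, 781705261677625], ![-18386885869288552, 2010257094921620, 0], ![-12182189803029872, 0, 0], ![0, 0, 0]]
def NZ32 : (Fin 5 ⊕ Fin 5) → Fin 3 → ℤ := Sum.elim ![![152911947352289101, -58238275995394940, -12748741090086989], ![155394719773959646, 38546644766091293, 33730347347846522], ![22381496685228440, 40255767548951844, 8962907502244492], ![169666822759461453, -90373170872849508, -27651839959269369], ![172126082746663481, -98293112166358849, -33066067936880937]] ![![32431220059105155, -169793415530359600, -74121448765328419], ![150329066528998009, -30828098582587376, -5250476531062325], ![121056317480688128, -13569013619240980, 0], ![80717711660966008, 0, 0], ![0, 0, 0]]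
def NZ33 : (Fin 5 ⊕ Fin 5) → Fin 3 → ℤ := Sum.elim ![![63449481951579023, -24225435689618260, -5263742373686767], ![64612592289721418, 16040588401336879, 14006355020788126], ![9336553025266900, 16844302167301572, 3721785636166376], ![70093938660392349, -36760101039889416, -12328065597708981], ![71879245826577283, -41092275944298107, -13611459778914291]] ![![13898732185908897, -71222834910712016, -29137290505538033], ![62512535086030067, -12719008768659088, -2152898927059735], ![50376356263244704, -5543646644066780, 0], ![33431892855795464, 0, 0], ![0, 0, 0]]
def NZ34 : (Fin 5 ⊕ Fin 5) → Fin 3 → ℤ := Sum.elim ![![-3934487871603298, 1491618772093400, 331038755109962], ![-3983131469006428, -986547468789494, -866721598304396], ![-570204203350805, -1019685154518282, -230309151844711], ![-4339413513857232, 2331878459877720, 764459843722704], ![-4376472240035078, 2493989740386862, 863303765083806]] ![![-783825035647854, 4280733601749232, 2092785302650354], ![-3852573222524602, 801572010963728, 138048402557870], ![-3098192950543064, 359077229064520, 0], ![-2083919719124344, 0, 0], ![0, 0, 0]]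
def NZ40 : (Fin 5 ⊕ Fin 5) → Fin 3 → ℤ := Sum.elim ![![-22077324325660, 9244064204240, 1475052992060], ![-24287782356520, -6206244864620, -5012668682840], ![-3921829804580, -7770226978200, -1331754145180], ![-28114068522060, 16028045933760, 2927139197580], ![-31219957207580, 18461142845020, 3254933558460]] ![![-3087966525249, 20832765700159, 22462132889935], ![-23582764624300, 3435902969600, 399372758060], ![-19499823849440, 750982720240, 0], ![-10800898423360, 0, 0], ![0, 0, 0]]
def NZ41 : (Fin 5 ⊕ Fin 5) → Fin 3 → ℤ := Sum.elim ![![5612439605122217, -2083792388896204, -491450731138465], ![5575409749232918, 1370869767333493, 1227563046228106], ![818561575691503, 1458258714414474, 332475337553345], ![6063198774837813, -3175154374005936, -1073670472828485], ![6142272132749641, -3484956947437049, -1277912248438497]] ![![1168682757023607, -6046484261709920, -2686666618980995], ![5402708931207095, -1081290869980246, -188392682930695], ![4350123204438088, -464783548425476, 0], ![3017531574363824, 0, 0], ![0, 0, 0]]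
def NZ42 : (Fin 5 ⊕ Fin 5) → Fin 3 → ℤ := Sum.elim ![![-10625559479348995, 3971089670063300, 919038139184555], ![-10614000653241970, -2615572647517895, -2328610876826990], ![-1567155132937925, -2811339880866030, -630041839315915], ![-11584889557577415, 6099170616378000, 2000478588983415], ![-11623772366418761, 6598993817038489, 2401086436616577]] ![![-2175066626007567, 11373947755091782, 5381984790594655], ![-10286402747874925, 2026802933748770, 348177272237405], ![-8295060936640280, 853165767159340, 0], ![-5686275484546960, 0, 0], ![0, 0, 0]]
def NZ43 : (Fin 5 ⊕ Fin 5) → Fin 3 → ℤ := Sum.elim ![![-39430978727896747, 14570419396289444, 3483186196097555], ![-39014322223919458, -9577187263823183, -8612202322492286], ![-5704297031373533, -10110100787776254, -2334263435448115], ![-42314652394390863, 22072481454932496, 7629324393782655], ![-43198947032738633, 24632584883683873, 8455990924672905]] ![![-8310988828435863, 42676493343127126, 18085545801800935], ![-37802693854341445, 7651060539698066, 1346275263560885], ![-30403782898846808, 3336958726366156, 0], ![-21271094033526544, 0, 0], ![0, 0, 0]]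
def NZ44 : (Fin 5 ⊕ Fin 5) → Fin 3 → ℤ := Sum.elim ![![126241234817465923, -47261717500875716, -10883307297733355], ![126287479009890802, 31138764172913927, 27680324901489134], ![18673904762063237, 33559727538048366, 7487328916047115], ![137971135150618887, -72739318395686544, -23666491957397175], ![139701090521008865, -78015506059114969, -26539875142157937]] ![![25724166286677231, -134902767417841318, -64869519081733375], ![122393319877596205, -24016552946519714, -4110037424176925], ![98738866455765272, -10052442310910764, 0], ![67474795300533136, 0, 0], ![0, 0, 0]]
def NZ : Fin 5 × Fin 5 → (Fin 5 ⊕ Fin 5) → Fin 3 → ℤ := fun ij =>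
  ![![NZ00, NZ01, NZ02, NZ03, NZ04], ![NZ10, NZ11, NZ12, NZ13, NZ14], ![NZ20, NZ21, NZ22, NZ23, NZ24], ![NZ30, NZ31, NZ32, NZ33, NZ34], ![NZ40, NZ41, NZ42, NZ43, NZ44]] ij.1 ij.2

def dZ : Fin 5 × Fin 5 → ℤ := fun ij => ![![1, 98295537078936, 196591074157872, 393182148315744, 393182148315744], ![1399265880770736, 94021818075504, 3964586662183752, 23787519973102512, 1251974735426448], ![2798531761541472, 4325003631473184, 11893759986551256, 23787519973102512, 23787519973102512], ![2798531761541472, 1441667877157728, 11893759986551256, 23787519973102512, 1251974735426448], ![174908235096342, 540625453934148, 1251974735426448, 15858346648735008, 47575039946205024]] ij.1 ij.2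

def rowZ (ij : Fin 5 × Fin 5) : (Fin 5 ⊕ Fin 5) → Fin 3 → ℤ :=
  fun w k => if w = Sum.inl ij.1 then 2 * (PZ (Sum.inl ij.1) k - PZ (Sum.inr ij.2) k)
    else if w = Sum.inr ij.2 then 2 * (PZ (Sum.inr ij.2) k - PZ (Sum.inl ij.1) k) else 0

set_option maxHeartbeats 1000000 in
lemma condA : ∀ (w : Fin 5 ⊕ Fin 5) (k : Fin 3), ∑ ij : Fin 5 × Fin 5, wZ ij * rowZ ij w k = 0 := by
  decide

lemma condC : ∀ ij : Fin 5 × Fin 5, wZ ij ≠ 0 := by decide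

lemma condD : ∀ ij : Fin 5 × Fin 5, dZ ij ≠ 0 := by decide

set_option maxHeartbeats 4000000 in
lemma condB : ∀ s t : Fin 5 × Fin 5, s ≠ (0,0) → t ≠ (0,0) →
    (∑ w : Fin 5 ⊕ Fin 5, ∑ k : Fin 3, rowZ s w k * NZ t w k) = if s = t then dZ t else 0 := by
  decide

end K55Data

section K55Edges

/-- The unordered edge of `K55` corresponding to an index pair. -/
def eC (ij : Fin 5 × Fin 5) : Sym2 (Fin 5 ⊕ Fin 5) := s(Sum.inl ij.1, Sum.inr ij.2)

lemma eC_mem (ij : Fin 5 × Fin 5) : eC ij ∈ K55.edgeSet := by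
  rw [eC, SimpleGraph.mem_edgeSet]
  simp [K55]

lemma eC_inj : Function.Injective eC := by
  rintro ⟨i, j⟩ ⟨i', j'⟩ h
  rw [eC, eC, Sym2.eq_iff] at h
  rcases h with ⟨h1, h2⟩ | ⟨h1, h2⟩
  · simp only [Sum.inl.injEq] at h1
    simp only [Sum.inr.injEq] at h2
    simp [h1, h2]
  · exact absurd h1 (by simp)

lemma mem_rep {e : Sym2 (Fin 5 ⊕ Fin 5)} (he : e ∈ K55.edgeSet) : ∃ ij, eC ij = e := by
  induction e using Sym2.ind with
  | _ x y =>
    rw [SimpleGraph.mem_edgeSet] at he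
    rcases x with i | i <;> rcases y with j | j
    · simp [K55] at he
    · exact ⟨(i, j), rfl⟩
    · exact ⟨(j, i), Sym2.eq_swap⟩
    · simp [K55] at he

lemma rigidityRow_eC (p : (Fin 5 ⊕ Fin 5) → Fin 3 → ℂ) (ij : Fin 5 × Fin 5) :
    rigidityRow p (eC ij) = rRowFun p (Sum.inl ij.1) (Sum.inr ij.2) :=
  Sym2.lift_mk _ _ _

end K55Edges

section Part1

set_option maxHeartbeats 1000000 in
lemma K55_part1 (p : (Fin 5 ⊕ Fin 5) → Fin 3 → ℂ) :
    ¬ LinearIndependent ℂ (fun e : K55.edgeSet => rigidityRow p (e : Sym2 (Fin 5 ⊕ Fin 5))) := by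
  intro hLI
  have hinj : Function.Injective (fun ij : Fin 5 × Fin 5 => (⟨eC ij, eC_mem ij⟩ : K55.edgeSet)) :=
    fun a b h => eC_inj (Subtype.ext_iff.mp h)
  have h2 : LinearIndependent ℂ (fun ij : Fin 5 × Fin 5 => rigidityRow p (eC ij)) :=
    hLI.comp _ hinj
  by_cases hnc : ∃ v0 v1 v2 : Fin 5 ⊕ Fin 5,
      cross (fun k => p v1 k - p v0 k) (fun k => p v2 k - p v0 k) ≠ 0
  · obtain ⟨v0, v1, v2, h3⟩ := hnc
    have hmem : ∀ ij, rigidityRow p (eC ij) ∈ LinearMap.ker (Lmap p) := by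
      intro ij
      rw [rigidityRow_eC]
      exact rRow_mem_ker p (by simp)
    have hb : LinearIndependent ℂ
        (fun ij : Fin 5 × Fin 5 => (⟨rigidityRow p (eC ij), hmem ij⟩ :
          ↥(LinearMap.ker (Lmap p)))) := by
      apply LinearIndependent.of_comp (LinearMap.ker (Lmap p)).subtype
      exact h2
    have hcard := hb.fintype_card_le_finrank
    have hr : LinearMap.range (Lmap p) = ⊤ :=
      Lmap_surj p (fun c hc => flex_indep p v0 v1 v2 h3 c hc)
    have hrk := LinearMap.finrank_range_add_finrank_ker (Lmap p)
    rw [hr, finrank_top] at hrk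
    have h30 : Module.finrank ℂ ((Fin 5 ⊕ Fin 5) → Fin 3 → ℂ) = 30 := by
      rw [Module.finrank_pi_fintype ℂ]
      simp [Module.finrank_pi]
    have h6 : Module.finrank ℂ (Fin 6 → ℂ) = 6 := by
      rw [Module.finrank_pi]; simp
    rw [h30, h6] at hrk
    rw [Fintype.card_prod, Fintype.card_fin] at hcard
    omega
  · push_neg at hnc
    by_cases hconst : ∀ v w : Fin 5 ⊕ Fin 5, p v = p w
    · have hz : rigidityRow p (eC (0, 0)) = 0 := by
        rw [rigidityRow_eC]
        funext w k
        have hpe : p (Sum.inl (0 : Fin 5)) k - p (Sum.inr (0 : Fin 5)) k = 0 := by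
          rw [congrFun (hconst (Sum.inl 0) (Sum.inr 0)) k]; ring
        have hpe' : p (Sum.inr (0 : Fin 5)) k - p (Sum.inl (0 : Fin 5)) k = 0 := by
          rw [congrFun (hconst (Sum.inr 0) (Sum.inl 0)) k]; ring
        simp only [rRowFun]
        split_ifs <;> simp [hpe, hpe']
      exact h2.ne_zero (0, 0) hz
    · push_neg at hconst
      obtain ⟨x0, y0, hne⟩ := hconst
      set u : Fin 3 → ℂ := fun k => p x0 k - p y0 k with hudef
      have hu : u ≠ 0 := by
        intro h0
        apply hne
        funext k
        have hk := congrFun h0 k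
        simp only [hudef, Pi.zero_apply] at hk
        exact sub_eq_zero.mp hk
      have hcrossu : ∀ x y : Fin 5 ⊕ Fin 5, cross (fun k => p x k - p y k) u = 0 := by
        intro x y
        have heq : (fun k => p x k - p y k)
            = fun k => (p x k - p y0 k) - (p y k - p y0 k) := by funext k; ring
        rw [heq, cross_sub]
        funext j
        simp only [Pi.zero_apply]
        rw [congrFun (hnc y0 x x0) j, congrFun (hnc y0 y x0) j]
        simp
      have hmem : ∀ ij, rigidityRow p (eC ij) ∈ LinearMap.range (Tmap (V := Fin 5 ⊕ Fin 5) u) := by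
        intro ij
        obtain ⟨c, hcu⟩ := exists_smul_of_cross_eq_zero (hcrossu (Sum.inl ij.1) (Sum.inr ij.2)) hu
        refine ⟨fun w => if w = Sum.inl ij.1 then 2 * c
          else if w = Sum.inr ij.2 then -(2 * c) else 0, ?_⟩
        rw [rigidityRow_eC]
        funext w k
        have hck : p (Sum.inl ij.1) k - p (Sum.inr ij.2) k = c * (p x0 k - p y0 k) := by
          have := congrFun hcu k
          simpa [hudef] using this
        show (if w = Sum.inl ij.1 then 2 * c
          else if w = Sum.inr ij.2 then -(2 * c) else 0) * u k = rRowFun p _ _ w k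
        simp only [rRowFun]
        split_ifs
        · linear_combination -2 * hck
        · linear_combination 2 * hck
        · ring
      have hb : LinearIndependent ℂ
          (fun ij : Fin 5 × Fin 5 => (⟨rigidityRow p (eC ij), hmem ij⟩ :
            ↥(LinearMap.range (Tmap (V := Fin 5 ⊕ Fin 5) u)))) := by
        apply LinearIndependent.of_comp (LinearMap.range (Tmap (V := Fin 5 ⊕ Fin 5) u)).subtype
        exact h2
      have hcard := hb.fintype_card_le_finrank
      have hle := LinearMap.finrank_range_le (Tmap (V := Fin 5 ⊕ Fin 5) u)
      have h10 : Module.finrank ℂ ((Fin 5 ⊕ Fin 5) → ℂ) = 10 := by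
        rw [Module.finrank_pi]; simp
      rw [h10] at hle
      rw [Fintype.card_prod, Fintype.card_fin] at hcard
      omega

end Part1

section Part2

/-- The explicit integer configuration, as a complex configuration. -/
def pC : (Fin 5 ⊕ Fin 5) → Fin 3 → ℂ := fun v k => ((PZ v k : ℤ) : ℂ)

lemma rowC_cast (ij : Fin 5 × Fin 5) :
    rigidityRow pC (eC ij) = fun w k => ((rowZ ij w k : ℤ) : ℂ) := by
  rw [rigidityRow_eC]
  funext w k
  simp only [rRowFun, rowZ, pC]
  split_ifs <;> push_cast <;> ring

lemma stress_unique (c : Fin 5 × Fin 5 → ℂ)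
    (h : ∑ ij : Fin 5 × Fin 5, c ij • rigidityRow pC (eC ij) = 0) :
    ∃ lam : ℂ, ∀ ij, c ij = lam * ((wZ ij : ℤ) : ℂ) := by
  have hwk : ∀ (w : Fin 5 ⊕ Fin 5) (k : Fin 3),
      ∑ ij : Fin 5 × Fin 5, c ij * ((rowZ ij w k : ℤ) : ℂ) = 0 := by
    intro w k
    have h' := congrFun (congrFun h w) k
    simp only [Finset.sum_apply, Pi.smul_apply, Pi.zero_apply] at h'
    rw [← h']
    refine Finset.sum_congr rfl fun ij _ => ?_
    rw [rowC_cast]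
    simp
  have hw0 : ((wZ (0, 0) : ℤ) : ℂ) ≠ 0 := Int.cast_ne_zero.mpr (condC (0, 0))
  set lam : ℂ := c (0, 0) / ((wZ (0, 0) : ℤ) : ℂ) with hlamdef
  set c' : Fin 5 × Fin 5 → ℂ := fun ij => c ij - lam * ((wZ ij : ℤ) : ℂ) with hc'def
  have hstressZ : ∀ (w : Fin 5 ⊕ Fin 5) (k : Fin 3),
      ∑ ij : Fin 5 × Fin 5, ((wZ ij : ℤ) : ℂ) * ((rowZ ij w k : ℤ) : ℂ) = 0 := by
    intro w k
    have := condA w k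
    calc ∑ ij : Fin 5 × Fin 5, ((wZ ij : ℤ) : ℂ) * ((rowZ ij w k : ℤ) : ℂ)
        = ((∑ ij : Fin 5 × Fin 5, wZ ij * rowZ ij w k : ℤ) : ℂ) := by push_cast; rfl
      _ = 0 := by rw [this]; simp
  have hwk' : ∀ (w : Fin 5 ⊕ Fin 5) (k : Fin 3),
      ∑ ij : Fin 5 × Fin 5, c' ij * ((rowZ ij w k : ℤ) : ℂ) = 0 := by
    intro w k
    simp only [hc'def, sub_mul, Finset.sum_sub_distrib, hwk w k, mul_assoc]
    rw [← Finset.mul_sum, hstressZ w k]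
    simp
  have hc'00 : c' (0, 0) = 0 := by
    simp only [hc'def, hlamdef]
    rw [div_mul_cancel₀ _ hw0, sub_self]
  have hc'zero : ∀ ij, c' ij = 0 := by
    intro t
    by_cases ht : t = (0, 0)
    · rw [ht]; exact hc'00
    · have hpair : ∀ s : Fin 5 × Fin 5, s ≠ (0, 0) →
          (∑ w : Fin 5 ⊕ Fin 5, ∑ k : Fin 3, ((rowZ s w k : ℤ) : ℂ) * ((NZ t w k : ℤ) : ℂ))
            = if s = t then ((dZ t : ℤ) : ℂ) else 0 := by
        intro s hs
        have hB := condB s t hs ht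
        calc (∑ w : Fin 5 ⊕ Fin 5, ∑ k : Fin 3, ((rowZ s w k : ℤ) : ℂ) * ((NZ t w k : ℤ) : ℂ))
            = ((∑ w : Fin 5 ⊕ Fin 5, ∑ k : Fin 3, rowZ s w k * NZ t w k : ℤ) : ℂ) := by
              push_cast; rfl
          _ = _ := by rw [hB]; split_ifs <;> simp
      have hzero : (∑ w : Fin 5 ⊕ Fin 5, ∑ k : Fin 3,
          (∑ ij : Fin 5 × Fin 5, c' ij * ((rowZ ij w k : ℤ) : ℂ)) * ((NZ t w k : ℤ) : ℂ)) = 0 := by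
        refine Finset.sum_eq_zero fun w _ => Finset.sum_eq_zero fun k _ => ?_
        rw [hwk' w k, zero_mul]
      have hswap : (∑ w : Fin 5 ⊕ Fin 5, ∑ k : Fin 3,
          (∑ ij : Fin 5 × Fin 5, c' ij * ((rowZ ij w k : ℤ) : ℂ)) * ((NZ t w k : ℤ) : ℂ))
          = ∑ ij : Fin 5 × Fin 5, c' ij *
            (∑ w : Fin 5 ⊕ Fin 5, ∑ k : Fin 3, ((rowZ ij w k : ℤ) : ℂ) * ((NZ t w k : ℤ) : ℂ)) := by
        rw [Finset.sum_congr rfl fun w _ => Finset.sum_congr rfl fun k _ => Finset.sum_mul _ _ _]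
        rw [Finset.sum_congr rfl fun w _ => Finset.sum_comm]
        rw [Finset.sum_comm]
        refine Finset.sum_congr rfl fun ij _ => ?_
        rw [Finset.mul_sum]
        refine Finset.sum_congr rfl fun w _ => ?_
        rw [Finset.mul_sum]
        refine Finset.sum_congr rfl fun k _ => ?_
        ring
      rw [hswap] at hzero
      have hsingle : (∑ ij : Fin 5 × Fin 5, c' ij *
          (∑ w : Fin 5 ⊕ Fin 5, ∑ k : Fin 3, ((rowZ ij w k : ℤ) : ℂ) * ((NZ t w k : ℤ) : ℂ)))
          = c' t * ((dZ t : ℤ) : ℂ) := by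
        rw [Finset.sum_eq_single t]
        · rw [hpair t ht, if_pos rfl]
        · intro s _ hst
          by_cases hs0 : s = (0, 0)
          · rw [hs0, hc'00, zero_mul]
          · rw [hpair s hs0, if_neg hst, mul_zero]
        · intro habs
          exact absurd (Finset.mem_univ t) habs
      rw [hsingle] at hzero
      have hd : ((dZ t : ℤ) : ℂ) ≠ 0 := Int.cast_ne_zero.mpr (condD t)
      exact (mul_eq_zero.mp hzero).resolve_right hd
  refine ⟨lam, fun ij => ?_⟩
  have hz := hc'zero ij
  simp only [hc'def] at hz
  exact sub_eq_zero.mp hz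

lemma K55_part2 : ∀ S : Set (Sym2 (Fin 5 ⊕ Fin 5)), S ⊆ K55.edgeSet → S ≠ K55.edgeSet →
    ∃ p : (Fin 5 ⊕ Fin 5) → Fin 3 → ℂ,
      LinearIndependent ℂ (fun e : S => rigidityRow p (e : Sym2 (Fin 5 ⊕ Fin 5))) := by
  intro S hsub hne
  obtain ⟨e0, he0E, he0S⟩ : ∃ e, e ∈ K55.edgeSet ∧ e ∉ S := by
    by_contra hcon
    push_neg at hcon
    exact hne (Set.Subset.antisymm hsub hcon)
  obtain ⟨ij0, hij0⟩ := mem_rep he0E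
  refine ⟨pC, ?_⟩
  rw [linearIndependent_iff']
  intro s g hsum i hi
  set c : Fin 5 × Fin 5 → ℂ :=
    fun ij => ∑ x ∈ s, if (x : Sym2 (Fin 5 ⊕ Fin 5)) = eC ij then g x else 0 with hcdef
  have hcsum : ∑ ij : Fin 5 × Fin 5, c ij • rigidityRow pC (eC ij) = 0 := by
    have step1 : ∑ ij : Fin 5 × Fin 5, c ij • rigidityRow pC (eC ij)
        = ∑ x ∈ s, g x • rigidityRow pC (x : Sym2 (Fin 5 ⊕ Fin 5)) := by
      simp only [hcdef, Finset.sum_smul]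
      rw [Finset.sum_comm]
      refine Finset.sum_congr rfl fun x _ => ?_
      obtain ⟨ijx, hijx⟩ := mem_rep (hsub x.2)
      have hcond : ∀ ij : Fin 5 × Fin 5,
          ((x : Sym2 (Fin 5 ⊕ Fin 5)) = eC ij) = (ij = ijx) := by
        intro ij
        apply propext
        constructor
        · intro hx
          exact eC_inj (by rw [hijx, hx])
        · intro hx
          rw [hx, hijx]
      calc ∑ ij : Fin 5 × Fin 5,
            (if (x : Sym2 (Fin 5 ⊕ Fin 5)) = eC ij then g x else 0) • rigidityRow pC (eC ij)
          = ∑ ij : Fin 5 × Fin 5,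
            (if ij = ijx then g x • rigidityRow pC (eC ij) else 0) := by
            refine Finset.sum_congr rfl fun ij _ => ?_
            simp only [hcond ij, ite_smul, zero_smul]
        _ = g x • rigidityRow pC (eC ijx) := by
            rw [Finset.sum_ite_eq' Finset.univ ijx (fun ij => g x • rigidityRow pC (eC ij))]
            simp
        _ = g x • rigidityRow pC (x : Sym2 (Fin 5 ⊕ Fin 5)) := by rw [hijx]
    rw [step1, hsum]
  obtain ⟨lam, hlam⟩ := stress_unique c hcsum
  have hc0 : c ij0 = 0 := by
    simp only [hcdef]
    refine Finset.sum_eq_zero fun x _ => ?_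
    rw [if_neg]
    intro hx
    exact he0S (by rw [← hij0, ← hx]; exact x.2)
  have hlam0 : lam = 0 := by
    have h1 := hlam ij0
    rw [hc0] at h1
    have hw : ((wZ ij0 : ℤ) : ℂ) ≠ 0 := Int.cast_ne_zero.mpr (condC ij0)
    exact (mul_eq_zero.mp h1.symm).resolve_right hw
  have hczero : ∀ ij, c ij = 0 := by
    intro ij
    rw [hlam ij, hlam0, zero_mul]
  obtain ⟨iji, hiji⟩ := mem_rep (hsub i.2)
  have : c iji = g i := by
    simp only [hcdef]
    have hcond : ∀ x : ↥S, x ∈ s →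
        ((x : Sym2 (Fin 5 ⊕ Fin 5)) = eC iji) = (x = i) := by
      intro x _
      apply propext
      constructor
      · intro hx
        exact Subtype.ext (by rw [hx, hiji])
      · intro hx
        rw [hx, hiji]
    calc ∑ x ∈ s, (if (x : Sym2 (Fin 5 ⊕ Fin 5)) = eC iji then g x else 0)
        = ∑ x ∈ s, (if x = i then g x else 0) := by
          refine Finset.sum_congr rfl fun x hx => ?_
          simp only [hcond x hx]
      _ = g i := by rw [Finset.sum_ite_eq' s i g, if_pos hi]
  rw [← this, hczero iji]

end Part2

end AuxRigidity

/-- `K_{5,5}` is a circuit of the 3-dimensional rigidity matroid: the rows of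
its rigidity matrix are dependent for every configuration, while every proper
subset of its edge set is independent for some configuration. -/
theorem K55_isRigidityCircuit :
    (∀ p : (Fin 5 ⊕ Fin 5) → Fin 3 → ℂ,
      ¬ LinearIndependent ℂ (fun e : K55.edgeSet => rigidityRow p (e : Sym2 (Fin 5 ⊕ Fin 5)))) ∧
    (∀ S : Set (Sym2 (Fin 5 ⊕ Fin 5)), S ⊆ K55.edgeSet → S ≠ K55.edgeSet →
      ∃ p : (Fin 5 ⊕ Fin 5) → Fin 3 → ℂ,
        LinearIndependent ℂ (fun e : S => rigidityRow p (e : Sym2 (Fin 5 ⊕ Fin 5)))) := by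
  exact ⟨K55_part1, K55_part2⟩

end
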